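/- Let n ≥ 2 and let X be a ℤ₂ⁿ-equivariant triangulation of the sphere S^{n−1} in ℝⁿ. Then the number of vertices of X is even and is at least 2n. -/

import Mathlib

open Set

noncomputable section

/-- The sign-change map `x ↦ (ε₁x₁, …, εₙxₙ)` on `EuclideanSpace ℝ (Fin n)`. -/
def signMap {n : ℕ} (ε : Fin n → ℝ) (x : EuclideanSpace ℝ (Fin n)) :
    EuclideanSpace ℝ (Fin n) :=
  WithLp.toLp 2 (fun i => ε i * x i)

/-- `X` is a `ℤ₂ⁿ`-equivariant triangulation of the unit sphere `S^{n-1} ⊆ ℝⁿ`. -/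
structure IsEquivSphereTriangulation (n : ℕ)
    (X : Geometry.SimplicialComplex ℝ (EuclideanSpace ℝ (Fin n))) : Prop where
  finite : X.faces.Finite
  zero_not_mem : (0 : EuclideanSpace ℝ (Fin n)) ∉ X.space
  radial_homeo : ∃ φ : X.space ≃ₜ (Metric.sphere (0 : EuclideanSpace ℝ (Fin n)) 1),
      ∀ x : X.space, (φ x : EuclideanSpace ℝ (Fin n)) =
        ‖(x : EuclideanSpace ℝ (Fin n))‖⁻¹ • (x : EuclideanSpace ℝ (Fin n))
  equivariant : ∀ ε : Fin n → ℝ, (∀ i, ε i = 1 ∨ ε i = -1) →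
      ∀ s ∈ X.faces, ∃ t ∈ X.faces,
        (t : Set (EuclideanSpace ℝ (Fin n))) = signMap ε '' (s : Set (EuclideanSpace ℝ (Fin n)))

/-- Auxiliary: a finite set with a fixed-point-free involution has even cardinality. -/
lemma aux_even_card_of_invol {α : Type*} [DecidableEq α] (f : α → α) (s : Finset α)
    (hmap : ∀ a ∈ s, f a ∈ s) (hinv : ∀ a ∈ s, f (f a) = a) (hne : ∀ a ∈ s, f a ≠ a) :
    Even s.card := by
  induction s using Finset.strongInduction with
  | _ s ih =>
    rcases s.eq_empty_or_nonempty with rfl | ⟨a, ha⟩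
    · simp
    · have hfa : f a ∈ s := hmap a ha
      have hane : f a ≠ a := hne a ha
      set t := s \ {a, f a} with ht
      have htsub : t ⊂ s := by
        refine Finset.ssubset_iff_of_subset (Finset.sdiff_subset) |>.2 ⟨a, ha, by simp [ht]⟩
      have hsub2 : ({a, f a} : Finset α) ⊆ s := by
        intro x hx; simp at hx; rcases hx with rfl | rfl <;> assumption
      have hcard : s.card = t.card + 2 := by
        have hle := Finset.card_le_card hsub2
        rw [Finset.card_pair (Ne.symm hane)] at hle
        rw [ht, Finset.card_sdiff_of_subset hsub2, Finset.card_pair (Ne.symm hane)]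
        omega
      have heven : Even t.card := by
        refine ih t htsub ?_ ?_ ?_
        · intro b hb
          simp only [ht, Finset.mem_sdiff, Finset.mem_insert, Finset.mem_singleton] at hb ⊢
          obtain ⟨hbs, hb2⟩ := hb
          push_neg at hb2
          refine ⟨hmap b hbs, ?_⟩
          push_neg
          constructor
          · intro h; exact hb2.2 (by rw [← hinv b hbs, h])
          · intro h; exact hb2.1 (by rw [← hinv b hbs, h, hinv a ha])
        · intro b hb; exact hinv b (Finset.sdiff_subset hb)
        · intro b hb; exact hne b (Finset.sdiff_subset hb)
      rw [hcard]
      exact heven.add even_two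
  
lemma aux_two_mul_le_two_pow (k : ℕ) : 2 * k ≤ 2 ^ k := by
  induction k with
  | zero => simp
  | succ k ih =>
    rcases Nat.eq_zero_or_pos k with rfl | hk
    · norm_num
    · have h2 : 2 ≤ 2 ^ k := by
        calc (2:ℕ) = 2 ^ 1 := rfl
        _ ≤ 2 ^ k := Nat.pow_le_pow_right (by norm_num) hk
      have : 2 ^ (k + 1) = 2 ^ k + 2 ^ k := by rw [pow_succ]; ring
      omega

theorem stmt0 (n : ℕ) (hn : 2 ≤ n)
    (X : Geometry.SimplicialComplex ℝ (EuclideanSpace ℝ (Fin n)))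
    (hX : IsEquivSphereTriangulation n X) :
    Even X.vertices.ncard ∧ 2 * n ≤ X.vertices.ncard := by
  classical
  -- vertices are closed under sign maps
  have hclosed : ∀ ε : Fin n → ℝ, (∀ i, ε i = 1 ∨ ε i = -1) →
      ∀ v ∈ X.vertices, signMap ε v ∈ X.vertices := by
    intro ε hε v hv
    obtain ⟨t, ht, hts⟩ := hX.equivariant ε hε {v} hv
    rw [Finset.coe_singleton, Set.image_singleton, Finset.coe_eq_singleton] at hts
    exact Geometry.SimplicialComplex.mem_vertices.2 (hts ▸ ht)
  -- vertices are nonzero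
  have hne0 : ∀ v ∈ X.vertices, v ≠ 0 := by
    intro v hv h
    exact hX.zero_not_mem (h ▸ Geometry.SimplicialComplex.vertices_subset_space hv)
  -- vertices are finite
  have hVfin : X.vertices.Finite := by
    rw [Geometry.SimplicialComplex.vertices_eq]
    exact Set.Finite.biUnion hX.finite (fun s _ => s.finite_toSet)
  -- every coordinate is hit by some vertex
  have hhit : ∀ i : Fin n, ∃ v ∈ X.vertices, v i ≠ 0 := by
    intro i
    by_contra hcon
    push_neg at hcon
    have hspace : X.space ⊆ {x : EuclideanSpace ℝ (Fin n) | x i = 0} := by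
      intro x hx
      rw [Geometry.SimplicialComplex.mem_space_iff] at hx
      obtain ⟨s, hs, hxs⟩ := hx
      have hsub : (s : Set (EuclideanSpace ℝ (Fin n))) ⊆ {x | x i = 0} := by
        intro w hw
        have hwv : w ∈ X.vertices := by
          rw [Geometry.SimplicialComplex.vertices_eq]
          exact Set.mem_biUnion hs hw
        exact hcon w hwv
      have hconv : Convex ℝ {x : EuclideanSpace ℝ (Fin n) | x i = 0} := by
        intro a ha b hb p q hp hq hpq
        simp only [Set.mem_setOf_eq] at ha hb ⊢
        show p * a i + q * b i = 0
        rw [ha, hb]; ring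
      exact convexHull_min hsub hconv hxs
    obtain ⟨φ, hφ⟩ := hX.radial_homeo
    have hu : (EuclideanSpace.single i (1:ℝ)) ∈ Metric.sphere (0 : EuclideanSpace ℝ (Fin n)) 1 := by
      simp [mem_sphere_zero_iff_norm, EuclideanSpace.norm_single]
    have h1 := hφ (φ.symm ⟨_, hu⟩)
    rw [Homeomorph.apply_symm_apply] at h1
    have h3 : ((φ.symm ⟨_, hu⟩ : X.space) : EuclideanSpace ℝ (Fin n)) i = 0 :=
      hspace (φ.symm ⟨_, hu⟩).2
    have h2 := congrArg (fun x : EuclideanSpace ℝ (Fin n) => x i) h1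
    simp only [PiLp.smul_apply, smul_eq_mul, h3, mul_zero] at h2
    simp [EuclideanSpace.single_apply] at h2
  -- set up finset counting
  set F := hVfin.toFinset with hF
  have hmemF : ∀ v, v ∈ F ↔ v ∈ X.vertices := fun v => hVfin.mem_toFinset
  have hncard : X.vertices.ncard = F.card := Set.ncard_eq_toFinset_card _ hVfin
  -- evenness via antipodal involution
  have heven : Even F.card := by
    apply aux_even_card_of_invol (signMap (fun _ => (-1 : ℝ)))
    · intro a ha
      exact (hmemF _).2 (hclosed _ (fun i => Or.inr rfl) a ((hmemF _).1 ha))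
    · intro a ha
      ext j
      show (-1 : ℝ) * ((-1) * a j) = a j
      ring
    · intro a ha h
      refine hne0 a ((hmemF _).1 ha) ?_
      ext j
      have := congrArg (fun x : EuclideanSpace ℝ (Fin n) => x j) h
      show a j = 0
      simp only [signMap, WithLp.ofLp_toLp] at this
      nlinarith [this]
  refine ⟨hncard ▸ heven, ?_⟩
  rw [hncard]
  -- support function
  set supp : EuclideanSpace ℝ (Fin n) → Finset (Fin n) :=
    fun v => Finset.univ.filter (fun i => v i ≠ 0) with hsupp
  set I := F.image supp with hI
  -- fiber bound
  have hfiber : ∀ S ∈ I, 2 ^ S.card ≤ (F.filter (fun w => supp w = S)).card := by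
    intro S hS
    rw [hI, Finset.mem_image] at hS
    obtain ⟨v, hvF, hvS⟩ := hS
    have hvV := (hmemF _).1 hvF
    -- flip map
    set flip : Finset (Fin n) → EuclideanSpace ℝ (Fin n) :=
      fun T => signMap (fun i => if i ∈ T then -1 else 1) v with hflip
    have hεsign : ∀ T : Finset (Fin n), ∀ i, (if i ∈ T then (-1:ℝ) else 1) = 1 ∨ (if i ∈ T then (-1:ℝ) else 1) = -1 := by
      intro T i; split <;> simp
    have hflipV : ∀ T, flip T ∈ X.vertices := fun T => hclosed _ (hεsign T) v hvV
    have hflipcoord : ∀ T, ∀ i, flip T i = if i ∈ T then -(v i) else v i := by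
      intro T i
      rw [hflip]; simp only [signMap, WithLp.ofLp_toLp]
      split <;> ring
    have hflipsupp : ∀ T, supp (flip T) = S := by
      intro T
      rw [← hvS]
      ext i
      simp only [hsupp, Finset.mem_filter, Finset.mem_univ, true_and, hflipcoord]
      split <;> simp
    have hinj : Set.InjOn flip S.powerset := by
      intro T₁ h₁ T₂ h₂ h
      simp only [Finset.mem_coe, Finset.mem_powerset] at h₁ h₂
      by_contra hne
      have hnall : ¬ ∀ i, (i ∈ T₁ ↔ i ∈ T₂) := fun hall => hne (Finset.ext hall)
      obtain ⟨i, hi0⟩ := not_forall.1 hnall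
      have hi : (i ∈ T₁ ∧ i ∉ T₂) ∨ (i ∈ T₂ ∧ i ∉ T₁) := by tauto
      have hiS : i ∈ S := by
        rcases hi with ⟨h1, _⟩ | ⟨h1, _⟩
        · exact h₁ h1
        · exact h₂ h1
      have hvi : v i ≠ 0 := by
        rw [← hvS] at hiS
        simpa [hsupp] using hiS
      have : flip T₁ i = flip T₂ i := by rw [h]
      rw [hflipcoord, hflipcoord] at this
      rcases hi with ⟨h1, h2⟩ | ⟨h1, h2⟩ <;> simp [h1, h2] at this <;> exact hvi (by linarith)
    calc 2 ^ S.card = S.powerset.card := (Finset.card_powerset S).symm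
    _ ≤ (F.filter (fun w => supp w = S)).card := by
        apply Finset.card_le_card_of_injOn flip
        · intro T hT
          rw [Finset.mem_coe, Finset.mem_filter]
          exact ⟨(hmemF _).2 (hflipV T), hflipsupp T⟩
        · exact fun a ha b hb => hinj (by simpa using ha) (by simpa using hb)
  -- union of supports covers everything
  have hcover : (Finset.univ : Finset (Fin n)) ⊆ I.biUnion id := by
    intro i _
    obtain ⟨v, hv, hvi⟩ := hhit i
    rw [Finset.mem_biUnion]
    exact ⟨supp v, Finset.mem_image_of_mem _ ((hmemF _).2 hv), by simp [hsupp, hvi]⟩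
  have hn_le : n ≤ ∑ S ∈ I, S.card := by
    calc n = (Finset.univ : Finset (Fin n)).card := by simp
    _ ≤ (I.biUnion id).card := Finset.card_le_card hcover
    _ ≤ ∑ S ∈ I, S.card := Finset.card_biUnion_le
  calc 2 * n ≤ 2 * ∑ S ∈ I, S.card := by omega
  _ = ∑ S ∈ I, 2 * S.card := by rw [Finset.mul_sum]
  _ ≤ ∑ S ∈ I, 2 ^ S.card := Finset.sum_le_sum (fun S _ => aux_two_mul_le_two_pow S.card)
  _ ≤ ∑ S ∈ I, (F.filter (fun w => supp w = S)).card := Finset.sum_le_sum hfiber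
  _ = F.card := (Finset.card_eq_sum_card_fiberwise (fun v hv => Finset.mem_image_of_mem _ hv)).symm
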